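/- For any Hermitian positive definite Σ_int ∈ ℂ^{N×N} and h ∈ ℂ^N, we have log(1 + hᴴ Σ_int⁻¹ h) = max over u ∈ ℂ^N and ρ > 0 of [log ρ − ρ·e(u) + 1], where e(u) = uᴴ(Σ_int + h hᴴ)u − 2Re{uᴴh} + 1. -/

import Mathlib

open Matrix
open scoped BigOperators ComplexOrder

theorem vmv_mulVec {N : ℕ} (h u : Fin N → ℂ) :
    (vecMulVec h (star h)).mulVec u = (star h ⬝ᵥ u) • h := by
  ext i
  simp only [Matrix.mulVec, vecMulVec_apply, dotProduct, Pi.star_apply, Pi.smul_apply,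
    smul_eq_mul, Finset.sum_mul]
  exact Finset.sum_congr rfl fun j _ => by ring

theorem vmv_herm {N : ℕ} (h : Fin N → ℂ) : (vecMulVec h (star h)).IsHermitian := by
  refine Matrix.IsHermitian.ext fun i j => ?_
  simp [conjTranspose_apply, vecMulVec_apply, mul_comm]

theorem vmv_psd {N : ℕ} (h : Fin N → ℂ) : (vecMulVec h (star h)).PosSemidef := by
  refine .of_dotProduct_mulVec_nonneg (vmv_herm h) fun x => ?_
  rw [vmv_mulVec, dotProduct_smul, smul_eq_mul,
    show star x ⬝ᵥ h = star (star h ⬝ᵥ x) from star_dotProduct x h]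
  exact mul_star_self_nonneg _

/-- variational (WMMSE) characterization of the rate:
log(1 + hᴴΣ_int⁻¹h) is the maximum over u ∈ ℂ^N and ρ > 0 of
log ρ − ρ·e(u) + 1, where e(u) = uᴴ(Σ_int + hhᴴ)u − 2Re{uᴴh} + 1. -/
theorem rate_variational_characterization {N : ℕ}
    (Sint : Matrix (Fin N) (Fin N) ℂ) (hPD : Sint.PosDef) (h : Fin N → ℂ) :
    let e : (Fin N → ℂ) → ℝ := fun u =>
      (star u ⬝ᵥ (Sint + vecMulVec h (star h)).mulVec u).re
        - 2 * (star u ⬝ᵥ h).re + 1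
    IsGreatest {v : ℝ | ∃ (u : Fin N → ℂ) (ρ : ℝ), 0 < ρ ∧
        v = Real.log ρ - ρ * e u + 1}
      (Real.log (1 + (star h ⬝ᵥ Sint⁻¹.mulVec h).re)) := by
  intro e
  set A := Sint + vecMulVec h (star h) with hAdef
  have hAH : A.IsHermitian := hPD.isHermitian.add (vmv_herm h)
  have hAPS : A.PosSemidef := hPD.posSemidef.add (vmv_psd h)
  set s : ℂ := star h ⬝ᵥ Sint⁻¹.mulVec h with hsdef
  have hs0 : 0 ≤ s := (hPD.inv).posSemidef.dotProduct_mulVec_nonneg h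
  rw [Complex.nonneg_iff] at hs0
  set sr : ℝ := s.re with hsr
  have hsC : s = (sr : ℂ) := (Complex.ext (by simp [hsr]) (by simp [hs0.2])).symm
  set c : ℝ := 1 + sr with hc
  have hcpos : 0 < c := by have := hs0.1; positivity
  set u₀ : Fin N → ℂ := ((c : ℂ))⁻¹ • Sint⁻¹.mulVec h with hu₀
  have hcC : (c : ℂ) ≠ 0 := by exact_mod_cast hcpos.ne'
  -- A *ᵥ u₀ = h
  have hAu : A.mulVec u₀ = h := by
    rw [hu₀, Matrix.mulVec_smul, hAdef, Matrix.add_mulVec, vmv_mulVec, ← hsdef,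
      Matrix.mulVec_mulVec, Matrix.mul_nonsing_inv _ (isUnit_iff_isUnit_det _ |>.1 hPD.isUnit),
      Matrix.one_mulVec, hsC]
    rw [show h + (sr : ℂ) • h = (c : ℂ) • h by
      rw [hc]; push_cast; rw [add_smul, one_smul]]
    rw [smul_smul, inv_mul_cancel₀ hcC, one_smul]
  -- star u₀ ⬝ᵥ h = sr / c
  have hu₀h : star u₀ ⬝ᵥ h = ((sr / c : ℝ) : ℂ) := by
    rw [hu₀, star_smul, smul_dotProduct, star_dotProduct, ← hsdef]
    simp [hsC, smul_eq_mul, ← Complex.ofReal_inv, ← Complex.ofReal_mul, Complex.conj_ofReal,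
      div_eq_inv_mul]
  -- the quadratic identity
  have key : ∀ u : Fin N → ℂ,
      e u = (star (u - u₀) ⬝ᵥ A.mulVec (u - u₀)).re + 1 / c := by
    intro u
    have cross : star u₀ ⬝ᵥ A.mulVec u = star (star u ⬝ᵥ h) := by
      rw [star_dotProduct u₀ (A.mulVec u), star_mulVec, ← Matrix.dotProduct_mulVec,
        hAH.eq, hAu]
    have expand : star (u - u₀) ⬝ᵥ A.mulVec (u - u₀)
        = star u ⬝ᵥ A.mulVec u - star u ⬝ᵥ h - star u₀ ⬝ᵥ A.mulVec u + star u₀ ⬝ᵥ h := by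
      rw [Matrix.mulVec_sub, star_sub, dotProduct_sub, sub_dotProduct, sub_dotProduct, hAu]
      ring
    rw [expand, cross, hu₀h]
    simp only [Complex.add_re, Complex.sub_re, Complex.star_def, Complex.conj_re,
      Complex.ofReal_re]
    show (star u ⬝ᵥ A.mulVec u).re - 2 * (star u ⬝ᵥ h).re + 1 = _
    have h1c : 1 - sr / c = 1 / c := by
      rw [eq_div_iff hcpos.ne', sub_mul, div_mul_cancel₀ _ hcpos.ne', hc]; ring
    linarith [h1c]
  have emin : ∀ u, 1 / c ≤ e u := fun u => by
    have := hAPS.re_dotProduct_nonneg (u - u₀)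
    simp only [RCLike.re_to_complex] at this
    rw [key u]; linarith
  have eu₀ : e u₀ = 1 / c := by
    rw [key u₀]; simp
  constructor
  · exact ⟨u₀, c, hcpos, by rw [eu₀, mul_one_div, div_self hcpos.ne']; ring⟩
  · rintro v ⟨u, ρ, hρ, rfl⟩
    have hmin : ρ / c ≤ ρ * e u := by
      have h0 := emin u
      calc ρ / c = ρ * (1 / c) := by ring
        _ ≤ ρ * e u := mul_le_mul_of_nonneg_left h0 hρ.le
    have h2 : Real.log (ρ / c) ≤ ρ / c - 1 :=
      Real.log_le_sub_one_of_pos (by positivity)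
    rw [Real.log_div hρ.ne' hcpos.ne'] at h2
    have key2 : Real.log ρ - ρ * e u + 1 ≤ Real.log ρ - ρ / c + 1 := by linarith [hmin]
    calc Real.log ρ - ρ * e u + 1 ≤ Real.log ρ - ρ / c + 1 := key2
      _ ≤ Real.log c := by linarith [h2]
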